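/- arXiv:0710.3509 — 3 statements merged into one kernel-verified Lean document; each statement's English description precedes it below -/
import Mathlib

section
/- Let v : ℝ^d → ℝ^d be continuously differentiable with bounded derivative along a fixed continuous curve x : [0,T] → ℝ^d, and for a continuously differentiable F : [0,T] → ℝ^d with F(0) = 0 let UF denote the unique solution of u'(t) = F'(t) + v'(x(t)) u(t), u(0) = 0. Then the map U from (C₀¹[0,T], sup-norm) to (C[0,T], sup-norm) is Lipschitz: sup_{0≤t≤T} |UF(t) − UG(t)| ≤ C · sup_{0≤t≤T} |F(t) − G(t)| where C depends only on sup_{0≤t≤T} ‖v'(x(t))‖ and T. -/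
open Set

/-- Lipschitz continuity of the solution operator `U` of the linear inhomogeneous ODE
`u'(t) = F'(t) + v'(x(t)) u(t)`, `u(0) = 0`, with Lipschitz constant depending only on
`K = sup ‖v'(x(t))‖` and `T`. Here `A t = v'(x(t))` along the fixed curve `x`. -/
theorem stmt_2 (d : ℕ) (T : ℝ) (hT : 0 < T)
    (v : EuclideanSpace ℝ (Fin d) → EuclideanSpace ℝ (Fin d)) (hv : ContDiff ℝ 1 v)
    (x : ℝ → EuclideanSpace ℝ (Fin d)) (hx : ContinuousOn x (Icc 0 T))
    (A : ℝ → EuclideanSpace ℝ (Fin d) →L[ℝ] EuclideanSpace ℝ (Fin d))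
    (hA : ∀ t, A t = fderiv ℝ v (x t))
    (K : ℝ) (hK : ∀ t ∈ Icc 0 T, ‖A t‖ ≤ K)
    (F G F' G' uF uG : ℝ → EuclideanSpace ℝ (Fin d))
    (hF0 : F 0 = 0) (hG0 : G 0 = 0)
    (hF : ∀ t ∈ Icc 0 T, HasDerivAt F (F' t) t)
    (hG : ∀ t ∈ Icc 0 T, HasDerivAt G (G' t) t)
    (hF'c : ContinuousOn F' (Icc 0 T)) (hG'c : ContinuousOn G' (Icc 0 T))
    (huF0 : uF 0 = 0) (huG0 : uG 0 = 0)
    (huF : ∀ t ∈ Icc 0 T, HasDerivAt uF (F' t + A t (uF t)) t)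
    (huG : ∀ t ∈ Icc 0 T, HasDerivAt uG (G' t + A t (uG t)) t)
    (M : ℝ) (hM : ∀ t ∈ Icc 0 T, ‖F t - G t‖ ≤ M) :
    ∀ t ∈ Icc 0 T, ‖uF t - uG t‖ ≤ Real.exp (K * T) * M := by
  have h0T : (0:ℝ) ∈ Icc 0 T := ⟨le_refl 0, hT.le⟩
  have hK0 : 0 ≤ K := le_trans (norm_nonneg _) (hK 0 h0T)
  have hM0 : 0 ≤ M := by
    have := hM 0 h0T
    simpa [hF0, hG0] using this
  -- y = uF - uG - (F - G)
  set y : ℝ → EuclideanSpace ℝ (Fin d) := fun t => uF t - uG t - (F t - G t) with hy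
  have hy' : ∀ t ∈ Icc 0 T, HasDerivAt y (A t (uF t - uG t)) t := by
    intro t ht
    have h := (((huF t ht).sub (huG t ht)).sub ((hF t ht).sub (hG t ht)))
    refine h.congr_deriv ?_
    simp [map_sub]
    try abel
  have hyc : ContinuousOn y (Icc 0 T) := fun t ht =>
    (hy' t ht).continuousAt.continuousWithinAt
  have hgron : ∀ t ∈ Icc 0 T, ‖y t‖ ≤ gronwallBound 0 K (K * M) (t - 0) := by
    apply norm_le_gronwallBound_of_norm_deriv_right_le hyc
    · intro t ht
      exact (hy' t (Ico_subset_Icc_self ht)).hasDerivWithinAt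
    · simp [hy, huF0, huG0, hF0, hG0]
    · intro t ht
      have ht' := Ico_subset_Icc_self ht
      have h1 : uF t - uG t = y t + (F t - G t) := by simp [hy]
      calc ‖A t (uF t - uG t)‖ ≤ ‖A t‖ * ‖uF t - uG t‖ := (A t).le_opNorm _
        _ ≤ K * (‖y t‖ + ‖F t - G t‖) := by
            apply mul_le_mul (hK t ht') _ (norm_nonneg _) hK0
            rw [h1]; exact norm_add_le _ _
        _ ≤ K * ‖y t‖ + K * M := by
            rw [mul_add]
            exact add_le_add le_rfl (mul_le_mul_of_nonneg_left (hM t ht') hK0)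
  intro t ht
  have h1 : ‖uF t - uG t‖ ≤ ‖y t‖ + ‖F t - G t‖ := by
    have : uF t - uG t = y t + (F t - G t) := by simp [hy]
    rw [this]; exact norm_add_le _ _
  have h2 : gronwallBound 0 K (K * M) (t - 0) ≤ M * (Real.exp (K * T) - 1) := by
    rcases eq_or_lt_of_le hK0 with hKe | hKp
    · rw [← hKe]
      simp [gronwallBound_K0]
    · simp only [gronwallBound_of_K_ne_0 hKp.ne', zero_mul, zero_add, sub_zero]
      have hKM : K * M / K = M := by field_simp
      rw [hKM]
      have hx1 : Real.exp (K * (t - 0)) ≤ Real.exp (K * T) := by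
        apply Real.exp_le_exp.2
        have := ht.2
        nlinarith
      have h1e : (1:ℝ) ≤ Real.exp (K * (t - 0)) := by
        apply Real.one_le_exp
        have := ht.1
        nlinarith
      simp only [sub_zero] at hx1 h1e
      nlinarith
  have h3 : ‖F t - G t‖ ≤ M := hM t ht
  have h4 := hgron t ht
  have : Real.exp (K * T) * M = M * (Real.exp (K * T) - 1) + M := by ring
  rw [this]
  linarith
end

section
/- Let φ : ℝ^d → ℝ be continuously differentiable, and let x, x_n : [0,T] → ℝ^d be continuous curves with sup_{0≤t≤T} |x_n(t) − x(t)| → 0. Let M = {τ ∈ [0,T] : φ(x(τ)) = inf_{0≤t≤T} φ(x(t))} and suppose a_n(x_n − x) converges uniformly on [0,T] to a continuous function ξ, where a_n → ∞. Then a_n [inf_{t∈[0,T]} φ(x_n(t)) − inf_{t∈[0,T]} φ(x(t))] → inf_{τ∈M} ⟨ξ(τ), ∇φ(x(τ))⟩. -/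
set_option maxHeartbeats 1000000

open Set Filter Topology Metric

theorem stmt_7 (d : ℕ) (T : ℝ) (hT : 0 < T)
    (φ : EuclideanSpace ℝ (Fin d) → ℝ) (hφ : ContDiff ℝ 1 φ)
    (x : ℝ → EuclideanSpace ℝ (Fin d)) (hx : ContinuousOn x (Icc 0 T))
    (xn : ℕ → ℝ → EuclideanSpace ℝ (Fin d)) (hxn : ∀ n, ContinuousOn (xn n) (Icc 0 T))
    (hunif : TendstoUniformlyOn (fun n t => xn n t) x atTop (Icc 0 T))
    (a : ℕ → ℝ) (ha : Tendsto a atTop atTop) (hapos : ∀ n, 0 < a n)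
    (ξ : ℝ → EuclideanSpace ℝ (Fin d)) (hξ : ContinuousOn ξ (Icc 0 T))
    (hconv : TendstoUniformlyOn (fun n t => a n • (xn n t - x t)) ξ atTop (Icc 0 T))
    (M : Set ℝ)
    (hM : M = {τ ∈ Icc 0 T | φ (x τ) = sInf ((fun t => φ (x t)) '' Icc 0 T)}) :
    Tendsto
      (fun n =>
        a n * (sInf ((fun t => φ (xn n t)) '' Icc 0 T) - sInf ((fun t => φ (x t)) '' Icc 0 T)))
      atTop (𝓝 (sInf ((fun τ => (inner ℝ (ξ τ) (gradient φ (x τ)) : ℝ)) '' M))) := by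
  have hKne : (Icc (0:ℝ) T).Nonempty := nonempty_Icc.2 hT.le
  have hK : IsCompact (Icc (0:ℝ) T) := isCompact_Icc
  have h0K : (0:ℝ) ∈ Icc (0:ℝ) T := ⟨le_refl 0, hT.le⟩
  have hφd : Differentiable ℝ φ := hφ.differentiable one_ne_zero
  have hDf : Continuous (fderiv ℝ φ) := hφ.continuous_fderiv one_ne_zero
  have hφc : Continuous φ := hφ.continuous
  set f : ℝ → ℝ := fun t => φ (x t) with hf_def
  have hf : ContinuousOn f (Icc 0 T) := hφc.comp_continuousOn hx
  set g : ℝ → ℝ := fun t => fderiv ℝ φ (x t) (ξ t) with hg_def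
  have hg : ContinuousOn g (Icc 0 T) := (hDf.comp_continuousOn hx).clm_apply hξ
  set m := sInf (f '' Icc 0 T) with hm_def
  -- rewrite the target inf in terms of g
  have hgrad : (fun τ => (inner ℝ (ξ τ) (gradient φ (x τ)) : ℝ)) = g := by
    funext τ
    rw [real_inner_comm]
    exact InnerProductSpace.toDual_symm_apply
  rw [hgrad]
  set L := sInf (g '' M) with hL_def
  -- basic facts about m and M
  have hbbf : BddBelow (f '' Icc 0 T) := hK.bddBelow_image hf
  have hm_le : ∀ t ∈ Icc (0:ℝ) T, m ≤ f t := fun t ht => csInf_le hbbf ⟨t, ht, rfl⟩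
  have hMsub : M ⊆ Icc (0:ℝ) T := by rw [hM]; exact fun τ hτ => hτ.1
  have hMclosed : IsClosed M := by
    have h1 : M = Icc (0:ℝ) T ∩ f ⁻¹' {m} := by
      rw [hM]; ext τ
      simp [hf_def, hm_def, and_comm]
    rw [h1]
    exact hf.preimage_isClosed_of_isClosed isClosed_Icc isClosed_singleton
  have hMc : IsCompact M := hK.of_isClosed_subset hMclosed hMsub
  have hMne : M.Nonempty := by
    obtain ⟨τ, hτK, hτ⟩ := hK.exists_sInf_image_eq hKne hf
    exact ⟨τ, by rw [hM]; exact ⟨hτK, hτ.symm⟩⟩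
  have hgM : ContinuousOn g M := hg.mono hMsub
  have hbbg : BddBelow (g '' M) := hMc.bddBelow_image hgM
  have hL_le : ∀ τ ∈ M, L ≤ g τ := fun τ hτ => csInf_le hbbg ⟨τ, hτ, rfl⟩
  obtain ⟨τ0, hτ0M, hτ0⟩ := hMc.exists_sInf_image_eq hMne hgM
  have hτ0L : g τ0 = L := hτ0.symm
  have hτ0K : τ0 ∈ Icc (0:ℝ) T := hMsub hτ0M
  have hfτ0 : f τ0 = m := by
    have := hτ0M; rw [hM] at this; exact this.2
  -- bound on g
  obtain ⟨G, hG⟩ := hK.exists_bound_of_continuousOn hg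
  have hG' : ∀ t ∈ Icc (0:ℝ) T, |g t| ≤ G := by
    intro t ht; have := hG t ht; rwa [Real.norm_eq_abs] at this
  have hG0 : 0 ≤ G := (abs_nonneg _).trans (hG' 0 h0K)
  -- continuity of the perturbed functions
  have hfn : ∀ n, ContinuousOn (fun t => φ (xn n t)) (Icc (0:ℝ) T) :=
    fun n => hφc.comp_continuousOn (hxn n)
  have hsn_le : ∀ n, ∀ t ∈ Icc (0:ℝ) T,
      sInf ((fun t => φ (xn n t)) '' Icc 0 T) ≤ φ (xn n t) :=
    fun n t ht => csInf_le (hK.bddBelow_image (hfn n)) ⟨t, ht, rfl⟩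
  have htn : ∀ n, ∃ t, t ∈ Icc (0:ℝ) T ∧
      φ (xn n t) = sInf ((fun t => φ (xn n t)) '' Icc 0 T) := by
    intro n
    obtain ⟨t, ht, h⟩ := hK.exists_sInf_image_eq hKne (hfn n)
    exact ⟨t, ht, h.symm⟩
  choose tn htnK htnf using htn
  -- the key uniform differentiability estimate
  have key : ∀ ε > 0, ∀ᶠ n in atTop, ∀ t ∈ Icc (0:ℝ) T,
      |a n * (φ (xn n t) - f t) - g t| < ε := by
    intro ε hε
    obtain ⟨Ξ, hΞ⟩ := hK.exists_bound_of_continuousOn hξ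
    have hΞ0 : 0 ≤ Ξ := (norm_nonneg _).trans (hΞ 0 h0K)
    have hC : IsCompact (x '' Icc 0 T) := hK.image_of_continuousOn hx
    obtain ⟨Dm, hDm⟩ := hC.exists_bound_of_continuousOn hDf.continuousOn
    have hDm0 : 0 ≤ Dm := (norm_nonneg _).trans (hDm (x 0) (mem_image_of_mem x h0K))
    have hu : UniformContinuousOn (fderiv ℝ φ) (cthickening 1 (x '' Icc 0 T)) :=
      hC.cthickening.uniformContinuousOn_of_continuous hDf.continuousOn
    have hε1 : 0 < ε / (2 * (Ξ + 1)) := by positivity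
    obtain ⟨δ, hδ0, hδ⟩ := Metric.uniformContinuousOn_iff.1 hu _ hε1
    set δ' := min (δ / 2) 1 with hδ'_def
    have hδ'0 : 0 < δ' := lt_min (by linarith) one_pos
    have hε2 : 0 < ε / (2 * (Dm + 1)) := by positivity
    have E1 := Metric.tendstoUniformlyOn_iff.1 hunif δ' hδ'0
    have E2 := Metric.tendstoUniformlyOn_iff.1 hconv _ hε2
    have E3 := Metric.tendstoUniformlyOn_iff.1 hconv 1 one_pos
    filter_upwards [E1, E2, E3] with n h1 h2 h3 t ht
    have hqp : dist (xn n t) (x t) ≤ δ' := by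
      have := h1 t ht; rw [dist_comm] at this; exact this.le
    have hpC : x t ∈ x '' Icc 0 T := mem_image_of_mem x ht
    have hsub : closedBall (x t) δ' ⊆ cthickening 1 (x '' Icc 0 T) :=
      (closedBall_subset_closedBall (min_le_right _ _)).trans
        (closedBall_subset_cthickening hpC 1)
    have hbound : ∀ c ∈ closedBall (x t) δ',
        ‖fderiv ℝ φ c - fderiv ℝ φ (x t)‖ ≤ ε / (2 * (Ξ + 1)) := by
      intro c hc
      have hcD := hsub hc
      have hptD : x t ∈ cthickening 1 (x '' Icc 0 T) := self_subset_cthickening _ hpC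
      have hdist : dist c (x t) < δ :=
        lt_of_le_of_lt (mem_closedBall.1 hc)
          (lt_of_le_of_lt (min_le_left _ _) (by linarith))
      have := hδ c hcD (x t) hptD hdist
      rw [dist_eq_norm] at this
      exact this.le
    have hmvt := (convex_closedBall (x t) δ').norm_image_sub_le_of_norm_fderiv_le'
      (fun c _ => hφd c) hbound (mem_closedBall_self hδ'0.le) (mem_closedBall.2 hqp)
    set y := a n • (xn n t - x t) with hy_def
    have hyn : ‖y‖ = a n * ‖xn n t - x t‖ := by
      rw [hy_def, norm_smul, Real.norm_eq_abs, abs_of_pos (hapos n)]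
    have hyξ : ‖y - ξ t‖ < ε / (2 * (Dm + 1)) := by
      rw [← dist_eq_norm, dist_comm]
      exact h2 t ht
    have hyb : ‖y‖ < Ξ + 1 := by
      have h3t : dist (ξ t) y < 1 := h3 t ht
      rw [dist_comm, dist_eq_norm] at h3t
      have := norm_sub_norm_le y (ξ t)
      have := hΞ t ht
      linarith
    have hmap : fderiv ℝ φ (x t) y = a n * fderiv ℝ φ (x t) (xn n t - x t) := by
      rw [hy_def, map_smul, smul_eq_mul]
    have est1 : |a n * (φ (xn n t) - f t) - fderiv ℝ φ (x t) y|
        ≤ ε / (2 * (Ξ + 1)) * ‖y‖ := by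
      calc |a n * (φ (xn n t) - f t) - fderiv ℝ φ (x t) y|
          = |a n| * |φ (xn n t) - f t - fderiv ℝ φ (x t) (xn n t - x t)| := by
            rw [hmap, ← abs_mul]; congr 1; ring
        _ = a n * ‖φ (xn n t) - φ (x t) - fderiv ℝ φ (x t) (xn n t - x t)‖ := by
            rw [abs_of_pos (hapos n)]; rfl
        _ ≤ a n * (ε / (2 * (Ξ + 1)) * ‖xn n t - x t‖) :=
            mul_le_mul_of_nonneg_left hmvt (hapos n).le
        _ = ε / (2 * (Ξ + 1)) * ‖y‖ := by rw [hyn]; ring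
    have est2 : |fderiv ℝ φ (x t) y - fderiv ℝ φ (x t) (ξ t)| ≤ Dm * ‖y - ξ t‖ := by
      rw [← map_sub]
      calc |fderiv ℝ φ (x t) (y - ξ t)| = ‖fderiv ℝ φ (x t) (y - ξ t)‖ := rfl
        _ ≤ ‖fderiv ℝ φ (x t)‖ * ‖y - ξ t‖ := ContinuousLinearMap.le_opNorm _ _
        _ ≤ Dm * ‖y - ξ t‖ := mul_le_mul_of_nonneg_right (hDm _ hpC) (norm_nonneg _)
    have tri : |a n * (φ (xn n t) - f t) - g t|
        ≤ |a n * (φ (xn n t) - f t) - fderiv ℝ φ (x t) y|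
          + |fderiv ℝ φ (x t) y - fderiv ℝ φ (x t) (ξ t)| := by
      have : g t = fderiv ℝ φ (x t) (ξ t) := rfl
      rw [this]
      exact abs_sub_le _ _ _
    have hA : ε / (2 * (Ξ + 1)) * ‖y‖ < ε / 2 := by
      have h := mul_lt_mul_of_pos_left hyb hε1
      have heq : ε / (2 * (Ξ + 1)) * (Ξ + 1) = ε / 2 := by
        field_simp
      linarith
    have hB : Dm * ‖y - ξ t‖ ≤ ε / 2 := by
      have h := mul_le_mul_of_nonneg_left hyξ.le hDm0
      have hd : (0:ℝ) < 2 * (Dm + 1) := by linarith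
      have heq : ε / (2 * (Dm + 1)) * (2 * (Dm + 1)) = ε := div_mul_cancel₀ _ hd.ne'
      nlinarith [hε2.le]
    linarith [est1, est2, tri]
  -- now prove the convergence
  refine tendsto_order.2 ⟨fun b hb => ?_, fun b hb => ?_⟩
  · -- lower bound : b < L
    have hbL : b < L := hb
    -- find η such that near-minimizers t of f have g t > (L+b)/2
    obtain ⟨η, hη0, hP⟩ : ∃ η > 0, ∀ t ∈ Icc (0:ℝ) T, f t < m + η → (L + b) / 2 < g t := by
      by_cases hA : {t ∈ Icc (0:ℝ) T | g t ≤ (L + b) / 2}.Nonempty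
      · have hAsub : {t ∈ Icc (0:ℝ) T | g t ≤ (L + b) / 2} ⊆ Icc (0:ℝ) T :=
          fun t ht => ht.1
        have hAclosed : IsClosed {t ∈ Icc (0:ℝ) T | g t ≤ (L + b) / 2} := by
          have h1 : {t ∈ Icc (0:ℝ) T | g t ≤ (L + b) / 2}
              = Icc (0:ℝ) T ∩ g ⁻¹' Iic ((L + b) / 2) := rfl
          rw [h1]
          exact hg.preimage_isClosed_of_isClosed isClosed_Icc isClosed_Iic
        have hAc : IsCompact {t ∈ Icc (0:ℝ) T | g t ≤ (L + b) / 2} :=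
          hK.of_isClosed_subset hAclosed hAsub
        obtain ⟨τA, hτAA, hτA⟩ := hAc.exists_sInf_image_eq hA (hf.mono hAsub)
        refine ⟨f τA - m, ?_, ?_⟩
        · have h1 : m ≤ f τA := hm_le τA hτAA.1
          have hne : f τA ≠ m := by
            intro hfeq
            have hτAM : τA ∈ M := by rw [hM]; exact ⟨hτAA.1, hfeq⟩
            have := hL_le τA hτAM
            have := hτAA.2
            linarith
          have := lt_of_le_of_ne h1 (Ne.symm hne)
          linarith
        · intro t ht hft
          by_contra hgt
          push_neg at hgt
          have htA : t ∈ {t ∈ Icc (0:ℝ) T | g t ≤ (L + b) / 2} := ⟨ht, hgt⟩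
          have hle : f τA ≤ f t := by
            rw [← hτA]
            exact csInf_le (hAc.bddBelow_image (hf.mono hAsub)) ⟨t, htA, rfl⟩
          linarith
      · refine ⟨1, one_pos, fun t ht _ => ?_⟩
        by_contra hgt
        push_neg at hgt
        exact hA ⟨t, ht, hgt⟩
    have hLb2 : 0 < (L - b) / 2 := by linarith
    have k1 := key ((L - b) / 2) hLb2
    set R := G + (L - b) / 2 with hR_def
    have hR0 : 0 < R := by rw [hR_def]; linarith
    have k2 := ha.eventually_gt_atTop (2 * R / η)
    filter_upwards [k1, k2] with n h1 h2
    have han := hapos n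
    have hfd : ∀ t ∈ Icc (0:ℝ) T, |φ (xn n t) - f t| ≤ R / a n := by
      intro t ht
      have h := h1 t ht
      have hGg := hG' t ht
      have h' := abs_add_le (a n * (φ (xn n t) - f t) - g t) (g t)
      rw [sub_add_cancel] at h'
      have hX : |a n * (φ (xn n t) - f t)| ≤ R := by
        rw [hR_def]; linarith [abs_sub_abs_le_abs_sub (a n * (φ (xn n t) - f t)) (g t)]
      rw [abs_mul, abs_of_pos han] at hX
      rw [le_div_iff₀ han]
      linarith [abs_nonneg (φ (xn n t) - f t)]
    have hRa : 2 * R / a n < η := by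
      rw [div_lt_iff₀ han]
      have h3 := mul_lt_mul_of_pos_right h2 hη0
      rw [div_mul_cancel₀ _ hη0.ne'] at h3
      linarith
    -- f (tn n) is close to m
    have e0 : |φ (xn n (tn n)) - f (tn n)| ≤ R / a n := hfd (tn n) (htnK n)
    have e1 : |φ (xn n τ0) - f τ0| ≤ R / a n := hfd τ0 hτ0K
    have hsτ0 : sInf ((fun t => φ (xn n t)) '' Icc 0 T) ≤ φ (xn n τ0) := hsn_le n τ0 hτ0K
    have hftn : f (tn n) < m + η := by
      have habs0 := abs_le.1 e0
      have habs1 := abs_le.1 e1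
      have h5 : φ (xn n (tn n)) ≤ φ (xn n τ0) := by
        rw [htnf n]; exact hsτ0
      have hRa' : R / a n + R / a n < η := by
        have : 2 * R / a n = R / a n + R / a n := by ring
        linarith [hRa, this]
      linarith [hfτ0]
    have hgtn : (L + b) / 2 < g (tn n) := hP (tn n) (htnK n) hftn
    have hk := abs_lt.1 (h1 (tn n) (htnK n))
    have hmtn : m ≤ f (tn n) := hm_le (tn n) (htnK n)
    show b < a n * (sInf ((fun t => φ (xn n t)) '' Icc 0 T) - m)
    rw [← htnf n]
    nlinarith [hk.1, hgtn, hmtn, han]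
  · -- upper bound : L < b
    have k1 := key (b - L) (by linarith)
    filter_upwards [k1] with n h1
    have e1 := abs_lt.1 (h1 τ0 hτ0K)
    have hsle : sInf ((fun t => φ (xn n t)) '' Icc 0 T) ≤ φ (xn n τ0) := hsn_le n τ0 hτ0K
    show a n * (sInf ((fun t => φ (xn n t)) '' Icc 0 T) - m) < b
    have han := hapos n
    have hmono : a n * (sInf ((fun t => φ (xn n t)) '' Icc 0 T) - m)
        ≤ a n * (φ (xn n τ0) - f τ0) := by
      rw [hfτ0]
      exact mul_le_mul_of_nonneg_left (by linarith) han.le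
    linarith [e1.2, hτ0L]
end

section
/- Let Ψ(y) = ∫ K(z)K(z+y) dz for a bounded compactly supported kernel K, let x : [0,T] → ℝ^d be an integral curve of a bounded C¹ vector field v satisfying the averaged nondegeneracy condition |(1/(u−s))∫ₛᵘ v(x(λ))dλ| ≥ γ > 0, and let f, g : ℝ → ℝ^d be bounded functions supported in [0,T] and continuous a.e. Then as h → 0⁺, ∫∫ Ψ((x(s+τh) − x(s))/h) f(s)^T Σ g(s + τh) dτ ds → ∫ ψ(v(x(s))) f(s)^T Σ g(s) ds, where ψ(w) = ∫_ℝ Ψ(wτ) dτ and Σ is a fixed d×d matrix. -/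
open Set MeasureTheory Filter Topology intervalIntegral

section Aux

variable {d : ℕ}

local notation "E" => EuclideanSpace ℝ (Fin d)

-- a.e. continuity implies AEStronglyMeasurable (Lebesgue)
lemma aux_aesm_of_ae_contAt {F : Type*} [TopologicalSpace F] [TopologicalSpace.PseudoMetrizableSpace F]
    {f : ℝ → F} (hf : ∀ᵐ s : ℝ, ContinuousAt f s) :
    AEStronglyMeasurable f (volume : Measure ℝ) := by
  obtain ⟨N, hNsub, hNm, hN0⟩ := exists_measurable_superset_of_null hf
  have hU : MeasurableSet Nᶜ := hNm.compl
  have hco : ContinuousOn f Nᶜ := by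
    intro s hs
    have : ContinuousAt f s := by
      by_contra hc
      exact hs (hNsub (by simpa using hc))
    exact this.continuousWithinAt
  have h1 : AEStronglyMeasurable f ((volume : Measure ℝ).restrict Nᶜ) :=
    hco.aestronglyMeasurable hU
  have h2 : AEStronglyMeasurable f ((volume : Measure ℝ).restrict Nᶜᶜ) := by
    have : (volume : Measure ℝ).restrict Nᶜᶜ = 0 := by
      rw [Measure.restrict_eq_zero]
      simpa using hN0
    rw [this]
    exact aestronglyMeasurable_zero_measure f
  have := h1.add_measure h2
  rwa [Measure.restrict_add_restrict_compl hU] at this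

-- quasi measure preserving of (s,τ) ↦ s + τ * h
lemma aux_qmp (h : ℝ) :
    Measure.QuasiMeasurePreserving (fun p : ℝ × ℝ => p.1 + p.2 * h)
      ((volume : Measure ℝ).prod (volume : Measure ℝ)) (volume : Measure ℝ) := by
  have hskew : MeasurePreserving (fun q : ℝ × ℝ => (q.1, q.2 + q.1 * h))
      ((volume : Measure ℝ).prod (volume : Measure ℝ)) ((volume : Measure ℝ).prod (volume : Measure ℝ)) := by
    exact MeasurePreserving.skew_product (g := fun a c => c + a * h)
      (MeasurePreserving.id (volume : Measure ℝ))
      (measurable_snd.add (measurable_fst.mul_const h))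
      (Eventually.of_forall fun a => map_add_right_eq_self volume (a * h))
  have hswap : MeasurePreserving (Prod.swap : ℝ × ℝ → ℝ × ℝ)
      ((volume : Measure ℝ).prod (volume : Measure ℝ)) ((volume : Measure ℝ).prod (volume : Measure ℝ)) :=
    Measure.measurePreserving_swap
  have hsnd : Measure.QuasiMeasurePreserving (Prod.snd : ℝ × ℝ → ℝ)
      ((volume : Measure ℝ).prod (volume : Measure ℝ)) (volume : Measure ℝ) :=
    Measure.quasiMeasurePreserving_snd
  have := (hsnd.comp (hskew.comp hswap).quasiMeasurePreserving)
  convert this using 1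
  funext p
  rfl



-- integrability of bounded measurable compactly supported
lemma aux_K_int (K : E → ℝ) (M : ℝ) (hKb : ∀ z, |K z| ≤ M) (hKm : Measurable K)
    (hKsupp : HasCompactSupport K) : Integrable K (volume : Measure E) := by
  have h1 : IntegrableOn K (tsupport K) volume := by
    refine Measure.integrableOn_of_bounded ?_ hKm.aestronglyMeasurable
      (M := M) (ae_of_all _ fun a => by simpa using hKb a)
    exact hKsupp.isCompact.measure_lt_top.ne
  exact (integrableOn_iff_integrable_of_support_subset (subset_tsupport K)).mp h1

-- boundedness of the correlation
lemma aux_corr_bound (K : E → ℝ) (M : ℝ) (hKb : ∀ z, |K z| ≤ M) (hKm : Measurable K)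
    (hKint : Integrable K (volume : Measure E)) (y : E) :
    |∫ z, K z * K (z + y)| ≤ M * ∫ z, ‖K z‖ := by
  have hM : 0 ≤ M := le_trans (abs_nonneg _) (hKb 0)
  have hInt : Integrable (fun z => M * ‖K (z + y)‖) (volume : Measure E) :=
    ((hKint.norm).comp_add_right y).const_mul M
  have hb : ∀ᵐ z : E ∂volume, ‖K z * K (z + y)‖ ≤ M * ‖K (z + y)‖ := by
    refine ae_of_all _ fun z => ?_
    rw [norm_mul]
    exact mul_le_mul_of_nonneg_right (hKb z) (norm_nonneg _)
  calc |∫ z, K z * K (z + y)| ≤ ∫ z, M * ‖K (z + y)‖ :=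
        norm_integral_le_of_norm_le hInt hb
    _ = M * ∫ z, ‖K (z + y)‖ := MeasureTheory.integral_const_mul _ _
    _ = M * ∫ z, ‖K z‖ := by rw [integral_add_right_eq_self (fun z => ‖K z‖) y]

-- vanishing of the correlation for large argument
lemma aux_corr_zero (K : E → ℝ) (r : ℝ) (hr : tsupport K ⊆ Metric.closedBall 0 r)
    (y : E) (hy : 2 * r < ‖y‖) : (∫ z, K z * K (z + y)) = 0 := by
  have : ∀ z : E, K z * K (z + y) = 0 := by
    intro z
    by_cases h1 : K z = 0
    · simp [h1]
    by_cases h2 : K (z + y) = 0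
    · simp [h2]
    exfalso
    have hz : ‖z‖ ≤ r := by
      simpa using hr (subset_closure (Function.mem_support.mpr h1))
    have hzy : ‖z + y‖ ≤ r := by
      simpa using hr (subset_closure (Function.mem_support.mpr h2))
    have : ‖y‖ ≤ 2 * r := by
      calc ‖y‖ = ‖(z + y) - z‖ := by rw [add_sub_cancel_left]
        _ ≤ ‖z + y‖ + ‖z‖ := norm_sub_le _ _
        _ ≤ 2 * r := by linarith
    linarith
  simp only [this, integral_zero]



lemma aux_corr_cont (K : E → ℝ) (M : ℝ) (hKb : ∀ z, |K z| ≤ M) (hKm : Measurable K)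
    (hKint : Integrable K (volume : Measure E)) :
    Continuous (fun y : E => ∫ z, K z * K (z + y)) := by
  have hM : 0 ≤ M := le_trans (abs_nonneg _) (hKb 0)
  have hchoice : ∀ n : ℕ, ∃ g : E → ℝ, HasCompactSupport g ∧
      (∫ z, ‖K z - g z‖) ≤ 1 / (n + 1) ∧ Continuous g ∧ Integrable g volume := by
    intro n
    exact hKint.exists_hasCompactSupport_integral_sub_le (by positivity)
  choose gs hgsupp hgapprox hgc hgint using hchoice
  set F : ℕ → E → ℝ := fun n y => ∫ z, K z * gs n (z + y) with hF
  -- each F n is continuous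
  have hFc : ∀ n, Continuous (F n) := by
    intro n
    obtain ⟨Mn, hMn⟩ := (hgsupp n).exists_bound_of_continuous (hgc n)
    refine continuous_of_dominated (bound := fun z => ‖K z‖ * Mn) ?_ ?_ ?_ ?_
    · intro y
      exact (hKm.mul (((hgc n).measurable).comp (measurable_add_const y))).aestronglyMeasurable
    · intro y
      refine ae_of_all _ fun z => ?_
      rw [norm_mul]
      exact mul_le_mul_of_nonneg_left (hMn (z + y)) (norm_nonneg _)
    · exact hKint.norm.mul_const Mn
    · exact ae_of_all _ fun z =>
        continuous_const.mul ((hgc n).comp (continuous_const.add continuous_id))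
  -- integrability facts
  have hI1 : ∀ y : E, Integrable (fun z => K z * K (z + y)) (volume : Measure E) := by
    intro y
    refine Integrable.mono' (((hKint.norm).comp_add_right y).const_mul M)
      (hKm.mul (hKm.comp (measurable_add_const y))).aestronglyMeasurable
      (ae_of_all _ fun z => ?_)
    rw [norm_mul]
    exact mul_le_mul_of_nonneg_right (hKb z) (norm_nonneg _)
  have hI2 : ∀ n (y : E), Integrable (fun z => K z * gs n (z + y)) (volume : Measure E) := by
    intro n y
    obtain ⟨Mn, hMn⟩ := (hgsupp n).exists_bound_of_continuous (hgc n)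
    refine Integrable.mono' (hKint.norm.mul_const Mn)
      (hKm.mul (((hgc n).measurable).comp (measurable_add_const y))).aestronglyMeasurable
      (ae_of_all _ fun z => ?_)
    rw [norm_mul]
    exact mul_le_mul_of_nonneg_left (hMn (z + y)) (norm_nonneg _)
  -- uniform bound on the error
  have herr : ∀ n (y : E), |(∫ z, K z * K (z + y)) - F n y| ≤ M * (1 / (n + 1)) := by
    intro n y
    have hdiff : (∫ z, K z * K (z + y)) - F n y
        = ∫ z, K z * (K (z + y) - gs n (z + y)) := by
      rw [hF]
      rw [← integral_sub (hI1 y) (hI2 n y)]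
      congr 1
      funext z
      ring
    rw [hdiff, ← Real.norm_eq_abs]
    have hsubint : Integrable (fun z => K z - gs n z) (volume : Measure E) :=
      hKint.sub (hgint n)
    calc ‖∫ z, K z * (K (z + y) - gs n (z + y))‖
        ≤ ∫ z, M * ‖K (z + y) - gs n (z + y)‖ := by
          refine norm_integral_le_of_norm_le
            (((hsubint.norm).comp_add_right y).const_mul M) (ae_of_all _ fun z => ?_)
          rw [norm_mul]
          exact mul_le_mul_of_nonneg_right (hKb z) (norm_nonneg _)
      _ = M * ∫ z, ‖K (z + y) - gs n (z + y)‖ := MeasureTheory.integral_const_mul _ _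
      _ = M * ∫ z, ‖K z - gs n z‖ := by
          rw [integral_add_right_eq_self (fun z => ‖K z - gs n z‖) y]
      _ ≤ M * (1 / (n + 1)) := mul_le_mul_of_nonneg_left (hgapprox n) hM
  -- uniform convergence
  have htu : TendstoUniformly F (fun y => ∫ z, K z * K (z + y)) atTop := by
    rw [Metric.tendstoUniformly_iff]
    intro ε hε
    have hto : Tendsto (fun n : ℕ => M * (1 / (n + 1 : ℝ))) atTop (𝓝 0) := by
      simpa using (tendsto_const_nhds : Tendsto (fun _ : ℕ => M) atTop (𝓝 M)).mul tendsto_one_div_add_atTop_nhds_zero_nat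
    filter_upwards [hto.eventually (gt_mem_nhds hε)] with n hn y
    rw [Real.dist_eq]
    exact lt_of_le_of_lt (herr n y) hn
  exact htu.continuous (Eventually.of_forall hFc).frequently



lemma aux_ftc (v : E → E) (hvc : Continuous v)
    (x : ℝ → E) (hx : ∀ t, HasDerivAt x (v (x t)) t) (a b : ℝ) :
    (∫ l in a..b, v (x l)) = x b - x a := by
  have hxc : Continuous x :=
    Differentiable.continuous (fun t => (hx t).differentiableAt)
  exact intervalIntegral.integral_eq_sub_of_hasDerivAt (fun t _ => hx t)
    ((hvc.comp hxc).intervalIntegrable a b)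

lemma aux_slope_bound (T : ℝ) (v : E → E) (hvc : Continuous v)
    (x : ℝ → E) (hx : ∀ t, HasDerivAt x (v (x t)) t)
    (γ : ℝ)
    (hnd : ∀ s u : ℝ, 0 ≤ s → s < u → u ≤ T →
      γ ≤ ‖(1 / (u - s)) • ∫ l in s..u, v (x l)‖) :
    ∀ a b : ℝ, a ∈ Icc 0 T → b ∈ Icc 0 T → a ≠ b → γ ≤ ‖slope x a b‖ := by
  have key : ∀ a b : ℝ, a ∈ Icc 0 T → b ∈ Icc 0 T → a < b → γ ≤ ‖slope x a b‖ := by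
    intro a b ha hb hab
    have := hnd a b ha.1 hab hb.2
    rw [aux_ftc v hvc x hx a b, one_div] at this
    rwa [slope_def_module]
  intro a b ha hb hab
  rcases lt_or_gt_of_ne hab with h | h
  · exact key a b ha hb h
  · rw [slope_comm]
    exact key b a hb ha h

lemma aux_v_lower (T : ℝ) (hT : 0 < T) (v : E → E) (hvc : Continuous v)
    (x : ℝ → E) (hx : ∀ t, HasDerivAt x (v (x t)) t)
    (γ : ℝ)
    (hsl : ∀ a b : ℝ, a ∈ Icc 0 T → b ∈ Icc 0 T → a ≠ b → γ ≤ ‖slope x a b‖) :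
    ∀ s ∈ Icc 0 T, γ ≤ ‖v (x s)‖ := by
  intro s hs
  -- choose an interval approaching s inside [0,T] \ {s}
  obtain ⟨I, hIsub, hIcl⟩ : ∃ I : Set ℝ, I ⊆ Icc 0 T \ {s} ∧ s ∈ closure I := by
    rcases lt_or_eq_of_le hs.2 with h | h
    · refine ⟨Ioo s T, ?_, ?_⟩
      · rintro u ⟨hu1, hu2⟩
        exact ⟨⟨le_trans hs.1 hu1.le, hu2.le⟩, by simp [ne_of_gt hu1]⟩
      · rw [closure_Ioo (ne_of_lt h)]
        exact ⟨le_refl s, h.le⟩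
    · refine ⟨Ioo 0 T, ?_, ?_⟩
      · rintro u ⟨hu1, hu2⟩
        exact ⟨⟨hu1.le, hu2.le⟩, by simp [h ▸ ne_of_lt hu2]⟩
      · rw [closure_Ioo (ne_of_lt hT)]
        exact ⟨hs.1, hs.2⟩
  have hne : (𝓝[I] s).NeBot := mem_closure_iff_nhdsWithin_neBot.mp hIcl
  have htend : Tendsto (fun u => ‖slope x s u‖) (𝓝[I] s) (𝓝 ‖v (x s)‖) := by
    have h1 : Tendsto (slope x s) (𝓝[≠] s) (𝓝 (v (x s))) :=
      hasDerivAt_iff_tendsto_slope.mp (hx s)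
    have h2 : 𝓝[I] s ≤ 𝓝[≠] s := by
      apply nhdsWithin_mono
      intro u hu
      exact (hIsub hu).2
    exact (h1.mono_left h2).norm
  refine ge_of_tendsto htend ?_
  filter_upwards [self_mem_nhdsWithin] with u hu
  have := hIsub hu
  rw [slope_comm]
  exact hsl u s this.1 hs (this.2 : u ≠ s)

end Aux
set_option maxHeartbeats 1000000 in
theorem stmt_16 (d : ℕ) (T : ℝ) (hT : 0 < T)
    (K : EuclideanSpace ℝ (Fin d) → ℝ)
    (hKb : ∃ M, ∀ z, |K z| ≤ M) (hKm : Measurable K) (hKsupp : HasCompactSupport K)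
    (Ψ : EuclideanSpace ℝ (Fin d) → ℝ) (hΨ : ∀ y, Ψ y = ∫ z, K z * K (z + y))
    (ψ : EuclideanSpace ℝ (Fin d) → ℝ) (hψ : ∀ w, ψ w = ∫ τ : ℝ, Ψ (τ • w))
    (v : EuclideanSpace ℝ (Fin d) → EuclideanSpace ℝ (Fin d))
    (hv : ContDiff ℝ 1 v) (hvb : ∃ M, ∀ y, ‖v y‖ ≤ M)
    (x : ℝ → EuclideanSpace ℝ (Fin d)) (hx : ∀ t, HasDerivAt x (v (x t)) t)
    (γ : ℝ) (hγ : 0 < γ)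
    (hnd : ∀ s u : ℝ, 0 ≤ s → s < u → u ≤ T →
      γ ≤ ‖(1 / (u - s)) • ∫ l in s..u, v (x l)‖)
    (Sig : Matrix (Fin d) (Fin d) ℝ)
    (f g : ℝ → EuclideanSpace ℝ (Fin d))
    (hfb : ∃ M, ∀ s, ‖f s‖ ≤ M) (hgb : ∃ M, ∀ s, ‖g s‖ ≤ M)
    (hfsupp : Function.support f ⊆ Icc 0 T) (hgsupp : Function.support g ⊆ Icc 0 T)
    (hfae : ∀ᵐ s : ℝ, ContinuousAt f s) (hgae : ∀ᵐ s : ℝ, ContinuousAt g s) :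
    Tendsto
      (fun h : ℝ => ∫ s : ℝ, ∫ τ : ℝ,
        Ψ ((1 / h) • (x (s + τ * h) - x s)) *
          (inner ℝ (f s) (Matrix.toEuclideanLin Sig (g (s + τ * h))) : ℝ))
      (𝓝[>] 0)
      (𝓝 (∫ s : ℝ, ψ (v (x s)) * (inner ℝ (f s) (Matrix.toEuclideanLin Sig (g s)) : ℝ))) := by
  classical
  obtain ⟨MK, hKb⟩ := hKb
  obtain ⟨Mf, hfb⟩ := hfb
  obtain ⟨Mg, hgb⟩ := hgb
  have hMK : 0 ≤ MK := le_trans (abs_nonneg _) (hKb 0)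
  have hMf : 0 ≤ Mf := le_trans (norm_nonneg _) (hfb 0)
  have hMg : 0 ≤ Mg := le_trans (norm_nonneg _) (hgb 0)
  have hxc : Continuous x := Differentiable.continuous (fun t => (hx t).differentiableAt)
  have hvc : Continuous v := hv.continuous
  -- Ψ facts
  have hKint : Integrable K volume := aux_K_int K MK hKb hKm hKsupp
  set CΨ : ℝ := MK * ∫ z, ‖K z‖ with hCΨdef
  have hCΨ : 0 ≤ CΨ := mul_nonneg hMK (integral_nonneg fun z => norm_nonneg _)
  have hΨb : ∀ y, |Ψ y| ≤ CΨ := fun y => by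
    rw [hΨ y]; exact aux_corr_bound K MK hKb hKm hKint y
  obtain ⟨r0, hr0⟩ := hKsupp.isCompact.isBounded.subset_closedBall 0
  set r : ℝ := max r0 0 with hrdef
  have hr : tsupport K ⊆ Metric.closedBall 0 r :=
    hr0.trans (Metric.closedBall_subset_closedBall (le_max_left _ _))
  have hrnn : 0 ≤ r := le_max_right _ _
  have hΨ0 : ∀ y : EuclideanSpace ℝ (Fin d), 2 * r < ‖y‖ → Ψ y = 0 := fun y hy => by
    rw [hΨ y]; exact aux_corr_zero K r hr y hy
  have hΨc : Continuous Ψ := by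
    have h1 := aux_corr_cont K MK hKb hKm hKint
    have heq : Ψ = fun y => ∫ z, K z * K (z + y) := funext hΨ
    rw [heq]; exact h1
  -- slope facts
  have hsl := aux_slope_bound T v hvc x hx γ hnd
  have hvpt := aux_v_lower T hT v hvc x hx γ hsl
  -- measurability of f, g
  have hfm : AEStronglyMeasurable f volume := aux_aesm_of_ae_contAt hfae
  have hgm : AEStronglyMeasurable g volume := aux_aesm_of_ae_contAt hgae
  -- matrix operator
  set A : EuclideanSpace ℝ (Fin d) →ₗ[ℝ] EuclideanSpace ℝ (Fin d) :=
    Matrix.toEuclideanLin Sig with hAdef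
  have hAc : Continuous A := A.continuous_of_finiteDimensional
  set A' : EuclideanSpace ℝ (Fin d) →L[ℝ] EuclideanSpace ℝ (Fin d) :=
    LinearMap.toContinuousLinearMap A with hA'def
  set MA : ℝ := ‖A'‖ with hMAdef
  have hMA : ∀ w, ‖A w‖ ≤ MA * ‖w‖ := fun w => A'.le_opNorm w
  have hMA0 : 0 ≤ MA := norm_nonneg _
  set Mc : ℝ := Mf * (MA * Mg) with hMcdef
  have hcb : ∀ a b : ℝ, |(inner ℝ (f a) (A (g b)) : ℝ)| ≤ Mc := by
    intro a b
    calc |(inner ℝ (f a) (A (g b)) : ℝ)| ≤ ‖f a‖ * ‖A (g b)‖ := abs_real_inner_le_norm _ _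
      _ ≤ Mf * (MA * Mg) := by
          refine mul_le_mul (hfb a) ?_ (norm_nonneg _) hMf
          exact (hMA _).trans (mul_le_mul_of_nonneg_left (hgb b) hMA0)
  -- constants
  set R : ℝ := (2 * r + 1) / γ with hRdef
  have hRpos : 0 < R := by positivity
  have hRγ : R * γ = 2 * r + 1 := div_mul_cancel₀ _ (ne_of_gt hγ)
  set C : ℝ := CΨ * Mc with hCdef
  have hC : 0 ≤ C := mul_nonneg hCΨ (mul_nonneg hMf (mul_nonneg hMA0 hMg))
  set SB : Set (ℝ × ℝ) := Icc (0:ℝ) T ×ˢ Icc (-R) R with hSBdef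
  set bound : ℝ × ℝ → ℝ := SB.indicator (fun _ => C) with hbounddef
  have hSBm : MeasurableSet SB := measurableSet_Icc.prod measurableSet_Icc
  have hboundnn : ∀ p, 0 ≤ bound p := fun p => Set.indicator_nonneg (fun _ _ => hC) p
  have hboundint : Integrable bound ((volume : Measure ℝ).prod (volume : Measure ℝ)) := by
    rw [hbounddef, integrable_indicator_iff hSBm]
    refine (integrableOn_const_iff).mpr (Or.inr ?_)
    exact (isCompact_Icc.prod isCompact_Icc).measure_lt_top
  -- the two integrands
  set G : ℝ → ℝ × ℝ → ℝ := fun h p =>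
    Ψ ((1 / h) • (x (p.1 + p.2 * h) - x p.1)) * (inner ℝ (f p.1) (A (g (p.1 + p.2 * h))) : ℝ)
    with hGdef
  set G0 : ℝ × ℝ → ℝ := fun p =>
    Ψ (p.2 • v (x p.1)) * (inner ℝ (f p.1) (A (g p.1)) : ℝ) with hG0def
  -- measurability
  have hGmeas : ∀ h : ℝ, AEStronglyMeasurable (G h) ((volume : Measure ℝ).prod (volume : Measure ℝ)) := by
    intro h
    have hpart1 : Continuous (fun p : ℝ × ℝ => Ψ ((1 / h) • (x (p.1 + p.2 * h) - x p.1))) := by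
      apply hΨc.comp
      fun_prop
    have hgcomp : AEStronglyMeasurable (fun p : ℝ × ℝ => g (p.1 + p.2 * h))
        ((volume : Measure ℝ).prod (volume : Measure ℝ)) := hgm.comp_quasiMeasurePreserving (aux_qmp h)
    have hfcomp : AEStronglyMeasurable (fun p : ℝ × ℝ => f p.1)
        ((volume : Measure ℝ).prod (volume : Measure ℝ)) :=
      hfm.comp_quasiMeasurePreserving Measure.quasiMeasurePreserving_fst
    exact hpart1.aestronglyMeasurable.mul
      (hfcomp.inner (hAc.comp_aestronglyMeasurable hgcomp))
  have hG0meas : AEStronglyMeasurable G0 ((volume : Measure ℝ).prod (volume : Measure ℝ)) := by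
    have hpart1 : Continuous (fun p : ℝ × ℝ => Ψ (p.2 • v (x p.1))) :=
      hΨc.comp (continuous_snd.smul ((hvc.comp hxc).comp continuous_fst))
    have hfcomp : AEStronglyMeasurable (fun p : ℝ × ℝ => f p.1)
        ((volume : Measure ℝ).prod (volume : Measure ℝ)) :=
      hfm.comp_quasiMeasurePreserving Measure.quasiMeasurePreserving_fst
    have hgcomp : AEStronglyMeasurable (fun p : ℝ × ℝ => g p.1)
        ((volume : Measure ℝ).prod (volume : Measure ℝ)) :=
      hgm.comp_quasiMeasurePreserving Measure.quasiMeasurePreserving_fst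
    exact hpart1.aestronglyMeasurable.mul
      (hfcomp.inner (hAc.comp_aestronglyMeasurable hgcomp))
  -- support facts
  have hf0 : ∀ s : ℝ, s ∉ Icc (0:ℝ) T → f s = 0 := by
    intro s hs
    by_contra h0
    exact hs (hfsupp (Function.mem_support.mpr h0))
  have hg0 : ∀ s : ℝ, s ∉ Icc (0:ℝ) T → g s = 0 := by
    intro s hs
    by_contra h0
    exact hs (hgsupp (Function.mem_support.mpr h0))
  -- domination for G h
  have hGb : ∀ h ∈ Ioi (0:ℝ), ∀ p : ℝ × ℝ, ‖G h p‖ ≤ bound p := by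
    intro h hh p
    obtain ⟨s, τ⟩ := p
    simp only [hGdef]
    by_cases hs : s ∈ Icc (0:ℝ) T
    · by_cases hτ : |τ| ≤ R
      · have hmem : ((s, τ) : ℝ × ℝ) ∈ SB := ⟨hs, mem_Icc.mpr (abs_le.mp hτ)⟩
        rw [hbounddef, Set.indicator_of_mem hmem]
        rw [Real.norm_eq_abs, abs_mul]
        exact mul_le_mul (hΨb _) (hcb _ _) (abs_nonneg _) hCΨ
      · have hτ' : R < |τ| := not_le.mp hτ
        have hτ0 : τ ≠ 0 := abs_pos.mp (lt_trans hRpos hτ')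
        have hzero : Ψ ((1 / h) • (x (s + τ * h) - x s)) *
            (inner ℝ (f s) (A (g (s + τ * h))) : ℝ) = 0 := by
          by_cases hu : s + τ * h ∈ Icc (0:ℝ) T
          · have hne : s ≠ s + τ * h := by
              intro heq
              have : τ * h = 0 := by linarith [heq.symm]
              exact (mul_ne_zero hτ0 (ne_of_gt hh)) this
            have harg : (1 / h) • (x (s + τ * h) - x s) = τ • slope x s (s + τ * h) := by
              rw [slope_def_module, smul_smul]
              congr 1
              have he : s + τ * h - s = τ * h := by ring
              rw [he, mul_inv, ← mul_assoc, mul_inv_cancel₀ hτ0, one_mul, one_div]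
            have hbig : 2 * r < ‖(1 / h) • (x (s + τ * h) - x s)‖ := by
              rw [harg, norm_smul, Real.norm_eq_abs]
              have h1 : γ ≤ ‖slope x s (s + τ * h)‖ := hsl s (s + τ * h) hs hu hne
              nlinarith [abs_nonneg τ, hγ]
            rw [hΨ0 _ hbig, zero_mul]
          · rw [hg0 _ hu, map_zero, inner_zero_right, mul_zero]
        rw [hzero, norm_zero]
        exact hboundnn _
    · rw [hf0 _ hs, inner_zero_left, mul_zero, norm_zero]
      exact hboundnn _
  -- domination for G0
  have hG0b : ∀ p : ℝ × ℝ, ‖G0 p‖ ≤ bound p := by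
    intro p
    obtain ⟨s, τ⟩ := p
    simp only [hG0def]
    by_cases hs : s ∈ Icc (0:ℝ) T
    · by_cases hτ : |τ| ≤ R
      · have hmem : ((s, τ) : ℝ × ℝ) ∈ SB := ⟨hs, mem_Icc.mpr (abs_le.mp hτ)⟩
        rw [hbounddef, Set.indicator_of_mem hmem]
        rw [Real.norm_eq_abs, abs_mul]
        exact mul_le_mul (hΨb _) (hcb _ _) (abs_nonneg _) hCΨ
      · have hτ' : R < |τ| := not_le.mp hτ
        have hbig : 2 * r < ‖τ • v (x s)‖ := by
          rw [norm_smul, Real.norm_eq_abs]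
          have h1 : γ ≤ ‖v (x s)‖ := hvpt s hs
          nlinarith [abs_nonneg τ, hγ]
        rw [hΨ0 _ hbig, zero_mul, norm_zero]
        exact hboundnn _
    · rw [hf0 _ hs, inner_zero_left, mul_zero, norm_zero]
      exact hboundnn _
  -- pointwise convergence
  have hlim : ∀ᵐ p ∂((volume : Measure ℝ).prod (volume : Measure ℝ)),
      Tendsto (fun h => G h p) (𝓝[>] (0:ℝ)) (𝓝 (G0 p)) := by
    obtain ⟨N, hNsub, hNm, hN0⟩ := exists_measurable_superset_of_null hgae
    have hae : ∀ᵐ p ∂((volume : Measure ℝ).prod (volume : Measure ℝ)), ContinuousAt g p.1 := by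
      have hnull : ((volume : Measure ℝ).prod (volume : Measure ℝ)) (N ×ˢ (univ : Set ℝ)) = 0 := by
        rw [Measure.prod_prod]
        simp [hN0]
      have h2 : ∀ᵐ p ∂((volume : Measure ℝ).prod (volume : Measure ℝ)), p ∉ N ×ˢ (univ : Set ℝ) :=
        measure_eq_zero_iff_ae_notMem.mp hnull
      filter_upwards [h2] with p hp
      by_contra hc
      exact hp ⟨hNsub (by simpa using hc), trivial⟩
    filter_upwards [hae] with p hgcont
    obtain ⟨s, τ⟩ := p
    simp only [hGdef, hG0def]
    have hu' : HasDerivAt (fun h : ℝ => s + τ * h) τ 0 := by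
      simpa using ((hasDerivAt_id (0:ℝ)).const_mul τ).const_add s
    have hphi : HasDerivAt (fun h : ℝ => x (s + τ * h)) (τ • v (x s)) 0 := by
      have h1 := (hx ((fun h : ℝ => s + τ * h) 0)).scomp 0 hu'
      rw [show (fun h : ℝ => s + τ * h) 0 = s by simp] at h1
      exact h1
    have hslope : Tendsto (fun h : ℝ => (1 / h) • (x (s + τ * h) - x s)) (𝓝[>] 0)
        (𝓝 (τ • v (x s))) := by
      have h1 := hasDerivAt_iff_tendsto_slope.mp hphi
      have h2 : 𝓝[>] (0:ℝ) ≤ 𝓝[≠] (0:ℝ) :=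
        nhdsWithin_mono _ (fun y hy => ne_of_gt hy)
      refine (h1.mono_left h2).congr (fun h => ?_)
      rw [slope_def_module]
      simp [one_div]
    have hΨt : Tendsto (fun h : ℝ => Ψ ((1 / h) • (x (s + τ * h) - x s))) (𝓝[>] 0)
        (𝓝 (Ψ (τ • v (x s)))) := (hΨc.continuousAt.tendsto).comp hslope
    have haff : Tendsto (fun h : ℝ => s + τ * h) (𝓝[>] 0) (𝓝 s) := by
      have h1 : Continuous (fun h : ℝ => s + τ * h) :=
        continuous_const.add (continuous_const.mul continuous_id)
      have h2 := (h1.tendsto 0).mono_left (nhdsWithin_le_nhds (s := Ioi (0:ℝ)))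
      simpa using h2
    have hgt : Tendsto (fun h : ℝ => g (s + τ * h)) (𝓝[>] 0) (𝓝 (g s)) :=
      hgcont.tendsto.comp haff
    have hit : Tendsto (fun h : ℝ => (inner ℝ (f s) (A (g (s + τ * h))) : ℝ)) (𝓝[>] 0)
        (𝓝 (inner ℝ (f s) (A (g s)))) :=
      Tendsto.inner tendsto_const_nhds ((hAc.continuousAt.tendsto).comp hgt)
    exact hΨt.mul hit
  -- integrability
  have hGint : ∀ h ∈ Ioi (0:ℝ), Integrable (G h) ((volume : Measure ℝ).prod (volume : Measure ℝ)) :=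
    fun h hh => Integrable.mono' hboundint (hGmeas h) (ae_of_all _ (hGb h hh))
  have hG0int : Integrable G0 ((volume : Measure ℝ).prod (volume : Measure ℝ)) :=
    Integrable.mono' hboundint hG0meas (ae_of_all _ hG0b)
  -- dominated convergence
  have hmain : Tendsto (fun h => ∫ p, G h p ∂((volume : Measure ℝ).prod (volume : Measure ℝ))) (𝓝[>] (0:ℝ))
      (𝓝 (∫ p, G0 p ∂((volume : Measure ℝ).prod (volume : Measure ℝ)))) := by
    refine tendsto_integral_filter_of_dominated_convergence bound
      (Eventually.of_forall hGmeas) ?_ hboundint hlim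
    filter_upwards [self_mem_nhdsWithin] with h hh
    exact ae_of_all _ (hGb h hh)
  -- rewrite RHS
  have hRHS : (∫ s : ℝ, ψ (v (x s)) * (inner ℝ (f s) (A (g s)) : ℝ))
      = ∫ p, G0 p ∂((volume : Measure ℝ).prod (volume : Measure ℝ)) := by
    have h1 : (∫ s : ℝ, ψ (v (x s)) * (inner ℝ (f s) (A (g s)) : ℝ))
        = ∫ s : ℝ, ∫ τ : ℝ, G0 (s, τ) := by
      refine integral_congr_ae (ae_of_all _ fun s => ?_)
      simp only [hG0def]
      rw [hψ (v (x s))]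
      exact (MeasureTheory.integral_mul_const _ _).symm
    rw [h1]
    exact MeasureTheory.integral_integral (μ := (volume : Measure ℝ)) (ν := (volume : Measure ℝ))
      (f := fun a b => G0 (a, b)) hG0int
  rw [hRHS]
  refine hmain.congr' ?_
  filter_upwards [self_mem_nhdsWithin] with h hh
  exact (MeasureTheory.integral_integral (μ := (volume : Measure ℝ)) (ν := (volume : Measure ℝ))
    (f := fun a b => Ψ ((1 / h) • (x (a + b * h) - x a)) *
      (inner ℝ (f a) (A (g (a + b * h))) : ℝ)) (hGint h hh)).symm
end
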